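/- Every 'pick a door and never switch' strategy is strictly dominated by a 'pick another door and always switch' strategy: row 2SS dominates row 1NN, row 3SS dominates row 2NN, and row 1SS dominates row 3NN; that is, in each of these three pairs C (dominating row) j ≥ C (dominated row) j for every column j ∈ Fin 6, with strict inequality for at least one column j. -/

import Mathlib

open Finset

/-- Contestant's payoff matrix for the Monty Hall zero-sum game.
Rows: 1SS,1SN,1NS,1NN,2SS,2SN,2NS,2NN,3SS,3SN,3NS,3NN.
Columns: 1L,1R,2L,2R,3L,3R. -/
def C : Fin 12 → Fin 6 → ℝ :=
  ![![0,0,1,1,1,1],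
    ![0,1,0,0,1,1],
    ![1,0,1,1,0,0],
    ![1,1,0,0,0,0],
    ![1,1,0,0,1,1],
    ![0,0,0,1,1,1],
    ![1,1,1,0,0,0],
    ![0,0,1,1,0,0],
    ![1,1,1,1,0,0],
    ![0,0,1,1,0,1],
    ![1,1,0,0,1,0],
    ![0,0,0,0,1,1]]

/-- A mixed strategy for Contestant. -/
def IsMixedC (P : Fin 12 → ℝ) : Prop := (∀ i, 0 ≤ P i) ∧ ∑ i, P i = 1

/-- A mixed strategy for Host. -/
def IsMixedH (Q : Fin 6 → ℝ) : Prop := (∀ j, 0 ≤ Q j) ∧ ∑ j, Q j = 1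

/-- Expected payoff (Contestant's winning probability) under profile (P,Q). -/
def E (P : Fin 12 → ℝ) (Q : Fin 6 → ℝ) : ℝ := ∑ i, ∑ j, P i * C i j * Q j

/-- Each never-switch strategy is strictly dominated by an always-switch strategy:
2SS dominates 1NN, 3SS dominates 2NN, 1SS dominates 3NN. -/
theorem never_switch_dominated :
    ((∀ j : Fin 6, C 4 j ≥ C 3 j) ∧ (∃ j : Fin 6, C 4 j > C 3 j)) ∧
    ((∀ j : Fin 6, C 8 j ≥ C 7 j) ∧ (∃ j : Fin 6, C 8 j > C 7 j)) ∧
    ((∀ j : Fin 6, C 0 j ≥ C 11 j) ∧ (∃ j : Fin 6, C 0 j > C 11 j)) := by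
  have h3 : C 3 = ![1,1,0,0,0,0] := rfl
  have h4 : C 4 = ![1,1,0,0,1,1] := rfl
  have h7 : C 7 = ![0,0,1,1,0,0] := rfl
  have h8 : C 8 = ![1,1,1,1,0,0] := rfl
  have h0 : C 0 = ![0,0,1,1,1,1] := rfl
  have h11 : C 11 = ![0,0,0,0,1,1] := rfl
  refine ⟨⟨fun j => ?_, ⟨4, by norm_num [h3, h4]; show (0:ℝ) < 1; norm_num⟩⟩, ⟨fun j => ?_, ⟨0, by norm_num [h7, h8]⟩⟩,
    fun j => ?_, ⟨2, by norm_num [h0, h11]; show (0:ℝ) < 1; norm_num⟩⟩ <;>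
    fin_cases j <;> norm_num [h3, h4, h7, h8, h0, h11]
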